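/- Global complexity with cut negative spectrum: let f : E → ℝ be twice continuously differentiable with L-Lipschitz-continuous Hessian (L > 0) and bounded below by f* with f(x₀) > f*. Fix σ⁺, δ, δ₋ ≥ 0 and set η := σ⁺ + δ + δ₋ with η > 0. Let (x_k)_{k≥0} and (y_k)_{k≥1} be sequences such that for each k ≥ 0: ∇²f(x_k) = A₊ᵏ − A₋ᵏ with A₊ᵏ, A₋ᵏ symmetric positive semidefinite; H_k is symmetric positive semidefinite with ‖A₊ᵏ − H_k‖ ≤ σ⁺ + δ; P_k is an orthogonal projection with H_k∘P_k = H_k and ‖A₋ᵏ∘P_k‖ ≤ δ₋ and ‖(H_k − A₊ᵏ)∘P_k‖ ≤ σ⁺ + δ; the iterate satisfies ∇f(x_k) + (H_k + α_k I)(x_{k+1} − x_k) = 0 with α_k = (L/2)·‖x_{k+1} − x_k‖ + η; and y_{k+1} := x_k + P_k(x_{k+1} − x_k). Then for every ε > 0, setting K = ⌈2(f(x₀) − f*)·(3√(2L)·ε^{−3/2} + 16η·ε^{−2})⌉, it holds that min_{1 ≤ i ≤ K} ‖∇f(y_i)‖ ≤ ε. -/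

import Mathlib

open scoped RealInnerProductSpace
open Real Set

def IsSymmPSD {n : ℕ} (H : EuclideanSpace ℝ (Fin n) →L[ℝ] EuclideanSpace ℝ (Fin n)) : Prop :=
  (∀ u v, ⟪H u, v⟫ = ⟪u, H v⟫) ∧ ∀ u, 0 ≤ ⟪H u, u⟫

noncomputable def hess {n : ℕ} (f : EuclideanSpace ℝ (Fin n) → ℝ)
    (x : EuclideanSpace ℝ (Fin n)) :
    EuclideanSpace ℝ (Fin n) →L[ℝ] EuclideanSpace ℝ (Fin n) :=
  fderiv ℝ (gradient f) x

section aux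
variable {n : ℕ}
local notation "E" => EuclideanSpace ℝ (Fin n)

lemma grad_contDiff (f : E → ℝ) (hf : ContDiff ℝ 2 f) : ContDiff ℝ 1 (gradient f) := by
  have h1 : ContDiff ℝ 1 (fderiv ℝ f) := hf.fderiv_right (by norm_num)
  exact ((InnerProductSpace.toDual ℝ E).symm : StrongDual ℝ E ≃ₗᵢ[ℝ] E).contDiff.comp h1

lemma hasFDerivAt_grad (f : E → ℝ) (hf : ContDiff ℝ 2 f) (x : E) :
    HasFDerivAt (gradient f) (hess f x) x :=
  ((grad_contDiff f hf).differentiable one_ne_zero x).hasFDerivAt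

lemma fderiv_apply_eq_inner (f : E → ℝ) (x v : E) :
    fderiv ℝ f x v = ⟪gradient f x, v⟫ := by
  rw [gradient, InnerProductSpace.toDual_symm_apply]

lemma hasDerivAt_line (x h : E) (t : ℝ) : HasDerivAt (fun t : ℝ => x + t • h) h t := by
  simpa using ((hasDerivAt_id t).smul_const h).const_add x

lemma grad_taylor (f : E → ℝ) (hf : ContDiff ℝ 2 f) {L : ℝ}
    (hLip : ∀ x y, ‖hess f x - hess f y‖ ≤ L * ‖x - y‖) (x h : E) :
    ‖gradient f (x + h) - gradient f x - hess f x h‖ ≤ L / 2 * ‖h‖ ^ 2 := by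
  set ψ : ℝ → E := fun t => gradient f (x + t • h) - gradient f x - t • (hess f x h) with hψ
  have hψ' : ∀ t : ℝ, HasDerivAt ψ (hess f (x + t • h) h - hess f x h) t := by
    intro t
    have h1 : HasDerivAt (fun t : ℝ => gradient f (x + t • h)) (hess f (x + t • h) h) t :=
      (hasFDerivAt_grad f hf (x + t • h)).comp_hasDerivAt (l := gradient f)
        (f := fun t : ℝ => x + t • h) t (hasDerivAt_line x h t)
    exact ((h1.sub_const (gradient f x)).sub ((hasDerivAt_id t).smul_const (hess f x h))).congr_deriv
      (by simp)
  have hB : ∀ t : ℝ, HasDerivAt (fun t : ℝ => L / 2 * ‖h‖ ^ 2 * t ^ 2) (L * ‖h‖ ^ 2 * t) t := by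
    intro t
    have := (hasDerivAt_pow 2 t).const_mul (L / 2 * ‖h‖ ^ 2)
    exact this.congr_deriv (by ring)
  have key := image_norm_le_of_norm_deriv_right_le_deriv_boundary
    (f := ψ) (f' := fun t => hess f (x + t • h) h - hess f x h) (a := 0) (b := 1)
    (fun t _ => ((hψ' t).continuousAt).continuousWithinAt)
    (fun t _ => (hψ' t).hasDerivWithinAt)
    (by simp [hψ]) hB
    (fun t ht => by
      have h2 : ‖hess f (x + t • h) h - hess f x h‖
          ≤ ‖hess f (x + t • h) - hess f x‖ * ‖h‖ := by
        have h2' := (hess f (x + t • h) - hess f x).le_opNorm h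
        rwa [ContinuousLinearMap.sub_apply] at h2'
      have h3 : ‖hess f (x + t • h) - hess f x‖ ≤ L * (t * ‖h‖) := by
        have h3' := hLip (x + t • h) x
        rwa [add_sub_cancel_left, norm_smul, Real.norm_eq_abs, abs_of_nonneg ht.1] at h3'
      calc ‖hess f (x + t • h) h - hess f x h‖ ≤ L * (t * ‖h‖) * ‖h‖ :=
            h2.trans (by
              have : (0:ℝ) ≤ ‖h‖ := norm_nonneg h
              exact mul_le_mul_of_nonneg_right h3 this)
        _ = L * ‖h‖ ^ 2 * t := by ring)
  have := key (x := 1) (by norm_num)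
  simpa [hψ] using this

lemma fun_taylor (f : E → ℝ) (hf : ContDiff ℝ 2 f) {L : ℝ}
    (hLip : ∀ x y, ‖hess f x - hess f y‖ ≤ L * ‖x - y‖) (x h : E) :
    f (x + h) ≤ f x + ⟪gradient f x, h⟫ + 1 / 2 * ⟪hess f x h, h⟫ + L / 6 * ‖h‖ ^ 3 := by
  set φ : ℝ → ℝ := fun t =>
    f (x + t • h) - f x - t * ⟪gradient f x, h⟫ - t ^ 2 / 2 * ⟪hess f x h, h⟫ with hφdef
  have hφ' : ∀ t : ℝ, HasDerivAt φ
      (⟪gradient f (x + t • h) - gradient f x - t • hess f x h, h⟫) t := by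
    intro t
    have h1 : HasDerivAt (fun t : ℝ => f (x + t • h)) (⟪gradient f (x + t • h), h⟫) t := by
      have := ((hf.differentiable (by norm_num) (x + t • h)).hasFDerivAt).comp_hasDerivAt t
        (hasDerivAt_line x h t)
      rwa [fderiv_apply_eq_inner] at this
    have h2 : HasDerivAt (fun t : ℝ => t * ⟪gradient f x, h⟫) (⟪gradient f x, h⟫) t := by
      simpa using (hasDerivAt_id t).mul_const (⟪gradient f x, h⟫)
    have h3 : HasDerivAt (fun t : ℝ => t ^ 2 / 2 * ⟪hess f x h, h⟫)
        (t * ⟪hess f x h, h⟫) t := by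
      have := (hasDerivAt_pow 2 t).div_const 2 |>.mul_const (⟪hess f x h, h⟫)
      exact this.congr_deriv (by ring)
    have h4 := ((h1.sub_const (f x)).sub h2).sub h3
    refine h4.congr_deriv ?_
    rw [inner_sub_left, inner_sub_left, real_inner_smul_left]
  have hB : ∀ t : ℝ, HasDerivAt (fun t : ℝ => L / 6 * ‖h‖ ^ 3 * t ^ 3)
      (L / 2 * ‖h‖ ^ 3 * t ^ 2) t := by
    intro t
    have := (hasDerivAt_pow 3 t).const_mul (L / 6 * ‖h‖ ^ 3)
    exact this.congr_deriv (by ring)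
  have key := image_norm_le_of_norm_deriv_right_le_deriv_boundary
    (f := φ) (f' := fun t => ⟪gradient f (x + t • h) - gradient f x - t • hess f x h, h⟫)
    (a := 0) (b := 1)
    (fun t _ => ((hφ' t).continuousAt).continuousWithinAt)
    (fun t _ => (hφ' t).hasDerivWithinAt)
    (by simp [hφdef]) hB
    (fun t ht => by
      have hcs := abs_real_inner_le_norm
        (gradient f (x + t • h) - gradient f x - t • hess f x h) h
      have hgr : ‖gradient f (x + t • h) - gradient f x - t • hess f x h‖
          ≤ L / 2 * (t * ‖h‖) ^ 2 := by
        have := grad_taylor f hf hLip x (t • h)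
        rw [ContinuousLinearMap.map_smul] at this
        rwa [norm_smul, Real.norm_eq_abs, abs_of_nonneg ht.1] at this
      calc ‖(⟪gradient f (x + t • h) - gradient f x - t • hess f x h, h⟫ : ℝ)‖
          ≤ ‖gradient f (x + t • h) - gradient f x - t • hess f x h‖ * ‖h‖ := by
            rw [Real.norm_eq_abs]; exact hcs
        _ ≤ L / 2 * (t * ‖h‖) ^ 2 * ‖h‖ :=
            mul_le_mul_of_nonneg_right hgr (norm_nonneg h)
        _ = L / 2 * ‖h‖ ^ 3 * t ^ 2 := by ring)
  have hfin := key (x := 1) (by norm_num)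
  have : |φ 1| ≤ L / 6 * ‖h‖ ^ 3 := by simpa using hfin
  have h1 : φ 1 ≤ L / 6 * ‖h‖ ^ 3 := (abs_le.mp this).2
  simp only [hφdef, one_smul, one_pow, one_mul] at h1
  linarith

lemma proj_norm_le (P : E →L[ℝ] E) (hsym : ∀ u v, ⟪P u, v⟫ = ⟪u, P v⟫)
    (hidem : P.comp P = P) (u : E) : ‖P u‖ ≤ ‖u‖ := by
  have hPP : P (P u) = P u := by
    have := ContinuousLinearMap.ext_iff.mp hidem u
    simpa [ContinuousLinearMap.comp_apply] using this
  have h1 : ‖P u‖ ^ 2 = ⟪u, P u⟫ := by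
    rw [← real_inner_self_eq_norm_sq, hsym, hPP]
  have h2 : (⟪u, P u⟫ : ℝ) ≤ ‖u‖ * ‖P u‖ := real_inner_le_norm u (P u)
  by_cases h : ‖P u‖ = 0
  · rw [h]; exact norm_nonneg u
  · have hpos : 0 < ‖P u‖ := lt_of_le_of_ne (norm_nonneg _) (Ne.symm h)
    have : ‖P u‖ * ‖P u‖ ≤ ‖u‖ * ‖P u‖ := by nlinarith
    exact le_of_mul_le_mul_right this hpos

end aux

set_option maxHeartbeats 1000000 in
/-- Global complexity with cut negative spectrum: after
`K = ⌈2(f(x₀) − f*)(3√(2L)/ε^{3/2} + 16η/ε²)⌉` iterations of the method with cubic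
step size and projected test points `y_k`, one of `y_1, …, y_K` has gradient norm
at most `ε`. -/
theorem global_complexity_cut_negative_spectrum {n : ℕ}
    (f : EuclideanSpace ℝ (Fin n) → ℝ) (hf : ContDiff ℝ 2 f)
    (L : ℝ) (hL : 0 < L)
    (hLip : ∀ x y, ‖hess f x - hess f y‖ ≤ L * ‖x - y‖)
    (fstar : ℝ) (hbdd : ∀ z, fstar ≤ f z)
    (σp δ δm : ℝ) (hσp : 0 ≤ σp) (hδ : 0 ≤ δ) (hδm : 0 ≤ δm)
    (η : ℝ) (hη : η = σp + δ + δm) (hηpos : 0 < η)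
    (x : ℕ → EuclideanSpace ℝ (Fin n))
    (y : ℕ → EuclideanSpace ℝ (Fin n))
    (hx0 : fstar < f (x 0))
    (Ap Am H P : ℕ → EuclideanSpace ℝ (Fin n) →L[ℝ] EuclideanSpace ℝ (Fin n))
    (hAp : ∀ k, IsSymmPSD (Ap k)) (hAm : ∀ k, IsSymmPSD (Am k))
    (hdecomp : ∀ k, hess f (x k) = Ap k - Am k)
    (hH : ∀ k, IsSymmPSD (H k))
    (hHerr : ∀ k, ‖Ap k - H k‖ ≤ σp + δ)
    (hPsym : ∀ k u v, ⟪P k u, v⟫ = ⟪u, P k v⟫)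
    (hPidem : ∀ k, (P k).comp (P k) = P k)
    (hHP : ∀ k, (H k).comp (P k) = H k)
    (hAmP : ∀ k, ‖(Am k).comp (P k)‖ ≤ δm)
    (hHApP : ∀ k, ‖(H k - Ap k).comp (P k)‖ ≤ σp + δ)
    (α : ℕ → ℝ)
    (hα : ∀ k, α k = L / 2 * ‖x (k + 1) - x k‖ + η)
    (hstep : ∀ k, gradient f (x k) + (H k) (x (k + 1) - x k)
      + α k • (x (k + 1) - x k) = 0)
    (hy : ∀ k, y (k + 1) = x k + (P k) (x (k + 1) - x k))
    (ε : ℝ) (hε : 0 < ε)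
    (K : ℕ)
    (hK : K = ⌈2 * (f (x 0) - fstar) *
        (3 * Real.sqrt (2 * L) / ε ^ ((3 : ℝ) / 2) + 16 * η / ε ^ 2)⌉₊) :
    ∃ i, 1 ≤ i ∧ i ≤ K ∧ ‖gradient f (y i)‖ ≤ ε := by
  by_contra hcon
  push_neg at hcon
  -- step vectors
  set v : ℕ → EuclideanSpace ℝ (Fin n) := fun k => x (k + 1) - x k with hv
  have hαpos : ∀ k, 0 < α k := by
    intro k
    rw [hα k]
    have := norm_nonneg (v k)
    nlinarith
  have hgstep : ∀ k, gradient f (x k) = -(H k (v k) + α k • v k) := by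
    intro k
    have h0 := hstep k
    rw [add_assoc] at h0
    exact eq_neg_of_add_eq_zero_left h0
  -- Lemma A : sufficient decrease
  have hdec : ∀ k, f (x (k + 1)) ≤ f (x k) - L / 3 * ‖v k‖ ^ 3 - η / 2 * ‖v k‖ ^ 2 := by
    intro k
    have hx1 : x k + v k = x (k + 1) := by
      show x k + (x (k + 1) - x k) = x (k + 1)
      abel
    have hT := fun_taylor f hf hLip (x k) (v k)
    rw [hx1] at hT
    have hginner : ⟪gradient f (x k), v k⟫ = -⟪H k (v k), v k⟫ - α k * ‖v k‖ ^ 2 := by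
      rw [hgstep k, inner_neg_left, inner_add_left, real_inner_smul_left,
        real_inner_self_eq_norm_sq]
      ring
    have hHess : ⟪hess f (x k) (v k), v k⟫ ≤ ⟪H k (v k), v k⟫ + (σp + δ) * ‖v k‖ ^ 2 := by
      rw [hdecomp k, ContinuousLinearMap.sub_apply, inner_sub_left]
      have h1 : (0:ℝ) ≤ ⟪Am k (v k), v k⟫ := (hAm k).2 _
      have h2 : (⟪Ap k (v k), v k⟫ : ℝ)
          = ⟪H k (v k), v k⟫ + ⟪(Ap k - H k) (v k), v k⟫ := by
        rw [ContinuousLinearMap.sub_apply, inner_sub_left]; ring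
      have h3 : (⟪(Ap k - H k) (v k), v k⟫ : ℝ) ≤ (σp + δ) * ‖v k‖ ^ 2 := by
        have hcs := real_inner_le_norm ((Ap k - H k) (v k)) (v k)
        have h4 := (Ap k - H k).le_opNorm (v k)
        have h5 : ‖Ap k - H k‖ * ‖v k‖ ≤ (σp + δ) * ‖v k‖ :=
          mul_le_mul_of_nonneg_right (hHerr k) (norm_nonneg _)
        nlinarith [norm_nonneg (v k), norm_nonneg ((Ap k - H k) (v k))]
      linarith
    have hHpsd : (0:ℝ) ≤ ⟪H k (v k), v k⟫ := (hH k).2 _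
    have hprod : α k * ‖v k‖ ^ 2 = L / 2 * ‖v k‖ ^ 3 + η * ‖v k‖ ^ 2 := by
      rw [hα k]; ring
    have hmul : (σp + δ) * ‖v k‖ ^ 2 ≤ η * ‖v k‖ ^ 2 := by
      apply mul_le_mul_of_nonneg_right _ (sq_nonneg _)
      rw [hη]; linarith
    linarith
  -- Lemma B : gradient bound at test point
  have hgrady : ∀ k, ‖gradient f (y (k + 1))‖ ≤ L * ‖v k‖ ^ 2 + 2 * η * ‖v k‖ := by
    intro k
    set w : EuclideanSpace ℝ (Fin n) := P k (v k) with hw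
    have hr := grad_taylor f hf hLip (x k) w
    have hgy : gradient f (y (k + 1))
        = (gradient f (x k + w) - gradient f (x k) - hess f (x k) w)
          - α k • v k - ((H k - Ap k).comp (P k)) (v k) - ((Am k).comp (P k)) (v k) := by
      rw [hy k]
      have h1 : hess f (x k) w = Ap k w - Am k w := by
        rw [hdecomp k, ContinuousLinearMap.sub_apply]
      have h2 : H k w = H k (v k) := by
        have := ContinuousLinearMap.ext_iff.mp (hHP k) (v k)
        simpa [ContinuousLinearMap.comp_apply] using this
      simp only [ContinuousLinearMap.comp_apply, ContinuousLinearMap.sub_apply]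
      rw [hgstep k, h1, h2]
      abel
    rw [hgy]
    have hb1 : ‖gradient f (x k + w) - gradient f (x k) - hess f (x k) w‖
        ≤ L / 2 * ‖v k‖ ^ 2 := by
      refine hr.trans ?_
      have hwle : ‖w‖ ≤ ‖v k‖ := proj_norm_le (P k) (hPsym k) (hPidem k) (v k)
      have hsq2 : ‖w‖ ^ 2 ≤ ‖v k‖ ^ 2 := by
        nlinarith [norm_nonneg w, norm_nonneg (v k)]
      nlinarith
    have hb2 : ‖α k • v k‖ = α k * ‖v k‖ := by
      rw [norm_smul, Real.norm_eq_abs, abs_of_pos (hαpos k)]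
    have hb3 : ‖((H k - Ap k).comp (P k)) (v k)‖ ≤ (σp + δ) * ‖v k‖ := by
      refine (((H k - Ap k).comp (P k)).le_opNorm (v k)).trans ?_
      exact mul_le_mul_of_nonneg_right (hHApP k) (norm_nonneg _)
    have hb4 : ‖((Am k).comp (P k)) (v k)‖ ≤ δm * ‖v k‖ := by
      refine (((Am k).comp (P k)).le_opNorm (v k)).trans ?_
      exact mul_le_mul_of_nonneg_right (hAmP k) (norm_nonneg _)
    have htri : ‖(gradient f (x k + w) - gradient f (x k) - hess f (x k) w)
          - α k • v k - ((H k - Ap k).comp (P k)) (v k) - ((Am k).comp (P k)) (v k)‖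
        ≤ ‖gradient f (x k + w) - gradient f (x k) - hess f (x k) w‖
          + ‖α k • v k‖ + ‖((H k - Ap k).comp (P k)) (v k)‖
          + ‖((Am k).comp (P k)) (v k)‖ := by
      calc _ ≤ ‖(gradient f (x k + w) - gradient f (x k) - hess f (x k) w)
            - α k • v k - ((H k - Ap k).comp (P k)) (v k)‖
            + ‖((Am k).comp (P k)) (v k)‖ := norm_sub_le _ _
        _ ≤ (‖(gradient f (x k + w) - gradient f (x k) - hess f (x k) w) - α k • v k‖
            + ‖((H k - Ap k).comp (P k)) (v k)‖) + ‖((Am k).comp (P k)) (v k)‖ := by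
            gcongr
            exact norm_sub_le _ _
        _ ≤ (‖gradient f (x k + w) - gradient f (x k) - hess f (x k) w‖ + ‖α k • v k‖
            + ‖((H k - Ap k).comp (P k)) (v k)‖) + ‖((Am k).comp (P k)) (v k)‖ := by
            gcongr
            exact norm_sub_le _ _
        _ = _ := by ring
    have hprod2 : α k * ‖v k‖ = L / 2 * ‖v k‖ ^ 2 + η * ‖v k‖ := by
      rw [hα k]; ring
    have hηeq : (σp + δ) * ‖v k‖ + δm * ‖v k‖ = η * ‖v k‖ := by rw [hη]; ring
    calc _ ≤ _ := htri
      _ ≤ L / 2 * ‖v k‖ ^ 2 + (L / 2 * ‖v k‖ ^ 2 + η * ‖v k‖)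
          + (σp + δ) * ‖v k‖ + δm * ‖v k‖ := by rw [hb2, hprod2]; linarith
      _ = L * ‖v k‖ ^ 2 + 2 * η * ‖v k‖ := by rw [hη]; ring
  -- constants
  set C : ℝ := 3 * Real.sqrt (2 * L) / ε ^ ((3 : ℝ) / 2) + 16 * η / ε ^ 2 with hC
  have hq : 0 < Real.sqrt (2 * L) := Real.sqrt_pos.mpr (by linarith)
  have hεp : 0 < ε ^ ((3 : ℝ) / 2) := Real.rpow_pos_of_pos hε _
  have hCpos : 0 < C := by
    have h1 : 0 < 3 * Real.sqrt (2 * L) / ε ^ ((3 : ℝ) / 2) := by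
      apply div_pos (by linarith) hεp
    have h2 : 0 < 16 * η / ε ^ 2 := by positivity
    rw [hC]; linarith
  set Δ : ℝ := 1 / (2 * C) with hΔ
  have hΔpos : 0 < Δ := by rw [hΔ]; positivity
  -- per-step strict decrease
  have hstepdec : ∀ k, ε < L * ‖v k‖ ^ 2 + 2 * η * ‖v k‖ →
      Δ < L / 3 * ‖v k‖ ^ 3 + η / 2 * ‖v k‖ ^ 2 := by
    intro k hk
    set s : ℝ := Real.sqrt ε with hs
    set q : ℝ := Real.sqrt (2 * L) with hqdef
    have hspos : 0 < s := Real.sqrt_pos.mpr hε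
    have hs2 : s ^ 2 = ε := Real.sq_sqrt hε.le
    have hq2 : q ^ 2 = 2 * L := Real.sq_sqrt (by linarith)
    set a : ℝ := ε * s / (6 * q) with ha
    set b : ℝ := ε ^ 2 / (32 * η) with hb
    have hapos : 0 < a := by rw [ha]; positivity
    have hbpos : 0 < b := by rw [hb]; positivity
    have hrwε : ε ^ ((3 : ℝ) / 2) = ε * s := by
      rw [hs, show (3 : ℝ) / 2 = 1 + 1 / 2 by norm_num, Real.rpow_add hε, Real.rpow_one,
        ← Real.sqrt_eq_rpow]
    have h2C : 2 * C = 1 / a + 1 / b := by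
      rw [ha, hb, hC, hrwε, one_div_div, one_div_div]
      ring
    have hΔa : Δ ≤ a := by
      have h1 : 1 / a ≤ 2 * C := by
        rw [h2C]
        have : (0:ℝ) < 1 / b := by positivity
        linarith
      rw [hΔ]
      calc 1 / (2 * C) ≤ 1 / (1 / a) := by
            apply one_div_le_one_div_of_le (by positivity) h1
        _ = a := one_div_one_div a
    have hΔb : Δ ≤ b := by
      have h1 : 1 / b ≤ 2 * C := by
        rw [h2C]
        have : (0:ℝ) < 1 / a := by positivity
        linarith
      rw [hΔ]
      calc 1 / (2 * C) ≤ 1 / (1 / b) := by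
            apply one_div_le_one_div_of_le (by positivity) h1
        _ = b := one_div_one_div b
    rcases lt_or_ge (ε / 2) (L * ‖v k‖ ^ 2) with hcase | hcase
    · -- cubic case
      have hsq : s < ‖v k‖ * q := by
        have h1 : ε < (‖v k‖ * q) ^ 2 := by nlinarith
        calc s = Real.sqrt ε := hs
          _ < Real.sqrt ((‖v k‖ * q) ^ 2) := Real.sqrt_lt_sqrt hε.le h1
          _ = ‖v k‖ * q := Real.sqrt_sq (by positivity)
      have hdgt : s / q < ‖v k‖ := (div_lt_iff₀ hq).mpr hsq
      have h1 : (s / q) ^ 3 < ‖v k‖ ^ 3 := by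
        apply pow_lt_pow_left₀ hdgt (by positivity)
        norm_num
      have heq : L / 3 * (s / q) ^ 3 = a := by
        rw [ha, div_pow, show s ^ 3 = s ^ 2 * s by ring, show q ^ 3 = q ^ 2 * q by ring,
          hs2, hq2]
        field_simp
        ring
      have h2 : a < L / 3 * ‖v k‖ ^ 3 := by
        rw [← heq]
        exact mul_lt_mul_of_pos_left h1 (by linarith)
      have h3 : (0:ℝ) ≤ η / 2 * ‖v k‖ ^ 2 := by positivity
      linarith
    · -- quadratic case
      have hd : ε / (4 * η) < ‖v k‖ := by
        rw [div_lt_iff₀ (by linarith)]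
        nlinarith
      have h1 : (ε / (4 * η)) ^ 2 < ‖v k‖ ^ 2 := by
        apply pow_lt_pow_left₀ hd (by positivity)
        norm_num
      have heq : η / 2 * (ε / (4 * η)) ^ 2 = b := by
        rw [hb, div_pow]
        field_simp
        ring
      have h2 : b < η / 2 * ‖v k‖ ^ 2 := by
        rw [← heq]
        exact mul_lt_mul_of_pos_left h1 (by linarith)
      have h3 : (0:ℝ) ≤ L / 3 * ‖v k‖ ^ 3 := by positivity
      linarith
  -- telescoping
  have hdec2 : ∀ k, k + 1 ≤ K → f (x (k + 1)) < f (x k) - Δ := by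
    intro k hk
    have h1 : ε < ‖gradient f (y (k + 1))‖ := hcon (k + 1) (Nat.le_add_left 1 k) hk
    have h2 : ε < L * ‖v k‖ ^ 2 + 2 * η * ‖v k‖ := lt_of_lt_of_le h1 (hgrady k)
    have h3 := hstepdec k h2
    have h4 := hdec k
    linarith
  have htel : ∀ k, 1 ≤ k → k ≤ K → f (x k) < f (x 0) - k * Δ := by
    intro k
    induction k with
    | zero => omega
    | succ m ih =>
      intro _ hkK
      by_cases hm : m = 0
      · subst hm
        have := hdec2 0 hkK
        push_cast
        linarith
      · have hm1 : 1 ≤ m := Nat.one_le_iff_ne_zero.mpr hm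
        have hmK := ih hm1 (le_trans (Nat.le_succ m) hkK)
        have h2 := hdec2 m hkK
        push_cast
        push_cast at hmK
        linarith
  have hK1 : 1 ≤ K := by
    rw [hK]
    apply Nat.ceil_pos.mpr
    exact mul_pos (by linarith) hCpos
  have hKval : 2 * (f (x 0) - fstar) * C ≤ (K : ℝ) := by
    rw [hK]
    exact Nat.le_ceil _
  have hfinal := htel K hK1 le_rfl
  have hKΔ : f (x 0) - fstar ≤ (K : ℝ) * Δ := by
    have h1 : 2 * (f (x 0) - fstar) * C * Δ ≤ (K : ℝ) * Δ :=
      mul_le_mul_of_nonneg_right hKval hΔpos.le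
    have h2 : 2 * (f (x 0) - fstar) * C * Δ = f (x 0) - fstar := by
      rw [hΔ]
      field_simp
    linarith
  have := hbdd (x K)
  linarith
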